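/- Let α be a nonnegative random variable with finite expectation and continuous CDF F which is DMRL, let T ≥ 0, c ≥ 0, k = 3T + c, r_H = α_H − k with r_H > 0, and let r* be the unique solution in (0, r_H) of r = m(k + r). Then the conditional probability of no transaction satisfies (F(r* + k) − F(k))/(1 − F(k)) ≤ 1 − e^{−1}. Moreover this bound is tight over DMRL distributions: if α is exponential with rate λ > 0, then r* = 1/λ and (F(r* + k) − F(k))/(1 − F(k)) = 1 − e^{−1} for every T, c ≥ 0. -/

import Mathlib

open MeasureTheory Set Filter

/-- The cumulative distribution function of a distribution `μ` on `ℝ`. -/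
noncomputable def cdfR (μ : Measure ℝ) (t : ℝ) : ℝ := (μ (Iic t)).toReal

/-- The mean residual lifetime function `m(t) = E[α − t ∣ α > t]` (with value `0` when
`P(α > t) = 0`, using the junk-value convention `x / 0 = 0`). -/
noncomputable def mrl (μ : Measure ℝ) (t : ℝ) : ℝ :=
  (∫ x, max (x - t) 0 ∂μ) / (μ (Ioi t)).toReal


private lemma sIoi_antitone (μ : Measure ℝ) [IsProbabilityMeasure μ] :
    Antitone (fun t : ℝ => (μ (Ioi t)).toReal) := fun a b hab =>
  ENNReal.toReal_mono (measure_ne_top μ _) (measure_mono (Ioi_subset_Ioi hab))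

private lemma sIoi_sub (μ : Measure ℝ) [IsProbabilityMeasure μ] {a b : ℝ} (hab : a ≤ b) :
    (μ (Ioi a)).toReal - (μ (Ioi b)).toReal = (μ (Ioc a b)).toReal := by
  have h : μ (Ioi a) = μ (Ioc a b) + μ (Ioi b) := by
    rw [← measure_union Ioc_disjoint_Ioi_same measurableSet_Ioi, Ioc_union_Ioi_eq_Ioi hab]
  rw [h, ENNReal.toReal_add (measure_ne_top μ _) (measure_ne_top μ _)]
  ring

private lemma cdf_sub (μ : Measure ℝ) [IsProbabilityMeasure μ] {a b : ℝ} (hab : a ≤ b) :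
    (μ (Iic b)).toReal - (μ (Iic a)).toReal = (μ (Ioc a b)).toReal := by
  have h : μ (Iic b) = μ (Iic a) + μ (Ioc a b) := by
    rw [← measure_union (Iic_disjoint_Ioc le_rfl) measurableSet_Ioc, Iic_union_Ioc_eq_Iic hab]
  rw [h, ENNReal.toReal_add (measure_ne_top μ _) (measure_ne_top μ _)]
  ring

private lemma one_sub_cdf (μ : Measure ℝ) [IsProbabilityMeasure μ] (a : ℝ) :
    1 - (μ (Iic a)).toReal = (μ (Ioi a)).toReal := by
  have h : μ (Iic a) + μ (Ioi a) = 1 := by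
    rw [← measure_union (Iic_disjoint_Ioi le_rfl) measurableSet_Ioi, Iic_union_Ioi, measure_univ]
  have := congrArg ENNReal.toReal h
  rw [ENNReal.toReal_add (measure_ne_top μ _) (measure_ne_top μ _)] at this
  simp at this
  linarith

private lemma meas_Ioi_mble (μ : Measure ℝ) : Measurable fun u : ℝ => μ (Ioi u) :=
  Antitone.measurable fun a b hab => measure_mono (Ioi_subset_Ioi hab)

private lemma lint_max_eq (μ : Measure ℝ) [IsProbabilityMeasure μ] (t : ℝ) :
    ∫⁻ x, ENNReal.ofReal (max (x - t) 0) ∂μ = ∫⁻ u in Ioi t, μ (Ioi u) := by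
  rw [lintegral_eq_lintegral_meas_lt (f := fun x => max (x - t) 0) μ
      (ae_of_all _ fun x => le_max_right _ _) (by fun_prop)]
  have h1 : ∫⁻ s in Ioi (0:ℝ), μ {a | s < max (a - t) 0} = ∫⁻ s in Ioi 0, μ (Ioi (t + s)) := by
    refine setLIntegral_congr_fun measurableSet_Ioi (fun s hs => ?_)
    congr 1
    ext a
    simp only [mem_setOf_eq, mem_Ioi, lt_max_iff]
    constructor
    · rintro (h | h)
      · linarith
      · exact absurd hs (by simpa using h.le)
    · intro h; left; linarith
  rw [h1]
  have hmp : MeasurePreserving (fun x : ℝ => t + x) volume volume :=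
    measurePreserving_add_left volume t
  have hpre : (fun x : ℝ => t + x) ⁻¹' Ioi t = Ioi 0 := by ext x; simp
  have := hmp.setLIntegral_comp_preimage (s := Ioi t) measurableSet_Ioi (meas_Ioi_mble μ)
  rw [hpre] at this
  exact this

private lemma int_max_eq (μ : Measure ℝ) [IsProbabilityMeasure μ] (t : ℝ) :
    ∫ x, max (x - t) 0 ∂μ = (∫⁻ u in Ioi t, μ (Ioi u)).toReal := by
  rw [integral_eq_lintegral_of_nonneg_ae (f := fun x => max (x - t) 0)
      (ae_of_all _ fun x => le_max_right _ _)
      ((continuous_id.sub continuous_const).max continuous_const).aestronglyMeasurable,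
    lint_max_eq]


private lemma lam_split (μ : Measure ℝ) {a b : ℝ} (hab : a ≤ b) :
    ∫⁻ u in Ioi a, μ (Ioi u) = (∫⁻ u in Ioc a b, μ (Ioi u)) + ∫⁻ u in Ioi b, μ (Ioi u) := by
  rw [← lintegral_union measurableSet_Ioi Ioc_disjoint_Ioi_same, Ioc_union_Ioi_eq_Ioi hab]

private lemma lam_Ioc_ne_top (μ : Measure ℝ) [IsProbabilityMeasure μ] (a b : ℝ) :
    ∫⁻ u in Ioc a b, μ (Ioi u) ≠ ⊤ := by
  refine ne_top_of_le_ne_top ?_ (lintegral_mono fun u => (prob_le_one : μ (Ioi u) ≤ 1))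
  rw [lintegral_const]
  exact ENNReal.mul_ne_top ENNReal.one_ne_top (by simp [Real.volume_Ioc])

private lemma lam_ne_top (μ : Measure ℝ) [IsProbabilityMeasure μ] (hint : Integrable id μ)
    (t : ℝ) : ∫⁻ u in Ioi t, μ (Ioi u) ≠ ⊤ := by
  rw [← lint_max_eq]
  have hb : ∀ x : ℝ, ENNReal.ofReal (max (x - t) 0) ≤ ENNReal.ofReal |x| + ENNReal.ofReal |t| := by
    intro x
    rw [← ENNReal.ofReal_add (abs_nonneg _) (abs_nonneg _)]
    refine ENNReal.ofReal_le_ofReal (max_le ?_ (by positivity))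
    have := le_abs_self x; have := neg_abs_le t; linarith
  refine ne_top_of_le_ne_top ?_ (lintegral_mono hb)
  rw [lintegral_add_right _ measurable_const, lintegral_const, measure_univ, mul_one]
  refine ENNReal.add_ne_top.2 ⟨?_, ENNReal.ofReal_ne_top⟩
  have h2 : ∫⁻ a, (‖a‖₊ : ENNReal) ∂μ < ⊤ := hint.2
  refine ne_of_lt (lt_of_le_of_lt (le_of_eq ?_) h2)
  refine lintegral_congr fun x => ?_
  rw [← enorm_eq_nnnorm, ← ofReal_norm, Real.norm_eq_abs]

private lemma G_sub (μ : Measure ℝ) [IsProbabilityMeasure μ] (hint : Integrable id μ)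
    {a b : ℝ} (hab : a ≤ b) :
    (∫ x, max (x - a) 0 ∂μ) - (∫ x, max (x - b) 0 ∂μ)
      = ∫ u in Ioc a b, (μ (Ioi u)).toReal := by
  rw [int_max_eq, int_max_eq, lam_split μ hab,
    ENNReal.toReal_add (lam_Ioc_ne_top μ a b) (lam_ne_top μ hint b), add_sub_cancel_right]
  exact (integral_toReal ((meas_Ioi_mble μ).aemeasurable)
    (ae_of_all _ fun u => measure_lt_top μ _)).symm

private lemma S_cont (μ : Measure ℝ) [IsProbabilityMeasure μ] (hcont : ∀ t : ℝ, μ {t} = 0) :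
    Continuous fun t : ℝ => (μ (Ioi t)).toReal := by
  rw [continuous_iff_continuousAt]
  intro t
  have key : Tendsto (fun r => μ (Metric.cthickening r {t})) (nhds 0) (nhds 0) := by
    have := tendsto_measure_cthickening (μ := μ) (s := {t}) ⟨1, one_pos, measure_ne_top μ _⟩
    simpa [closure_singleton, hcont t] using this
  have hdist : Tendsto (fun s : ℝ => dist s t) (nhds t) (nhds 0) := by
    have : Tendsto (fun s : ℝ => dist s t) (nhds t) (nhds (dist t t)) :=
      (continuous_id.dist continuous_const).tendsto t
    simpa using this
  have key2 : Tendsto (fun s : ℝ => (μ (Metric.cthickening (dist s t) {t})).toReal)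
      (nhds t) (nhds 0) := by
    have := (ENNReal.tendsto_toReal (a := 0) (by simp)).comp (key.comp hdist)
    exact this
  have hsub : Tendsto (fun s => (μ (Ioi s)).toReal - (μ (Ioi t)).toReal) (nhds t) (nhds 0) := by
    apply squeeze_zero_norm _ key2
    intro s
    have hcb : Metric.cthickening (dist s t) {t} = Metric.closedBall t (dist s t) :=
      Metric.cthickening_singleton t dist_nonneg
    rw [hcb, Real.norm_eq_abs]
    rcases le_total s t with h | h
    · have h1 : (μ (Ioi s)).toReal - (μ (Ioi t)).toReal = (μ (Ioc s t)).toReal := sIoi_sub μ h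
      have h2 : (0:ℝ) ≤ (μ (Ioc s t)).toReal := ENNReal.toReal_nonneg
      rw [h1, abs_of_nonneg h2]
      refine ENNReal.toReal_mono (measure_ne_top μ _) (measure_mono fun u hu => ?_)
      simp only [Metric.mem_closedBall, Real.dist_eq] at *
      rcases hu with ⟨hu1, hu2⟩
      rw [abs_of_nonpos (by linarith), abs_of_nonpos (by linarith)]
      linarith
    · have h1 : (μ (Ioi t)).toReal - (μ (Ioi s)).toReal = (μ (Ioc t s)).toReal := sIoi_sub μ h
      have h2 : (0:ℝ) ≤ (μ (Ioc t s)).toReal := ENNReal.toReal_nonneg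
      rw [abs_sub_comm, h1, abs_of_nonneg h2]
      refine ENNReal.toReal_mono (measure_ne_top μ _) (measure_mono fun u hu => ?_)
      simp only [Metric.mem_closedBall, Real.dist_eq] at *
      rcases hu with ⟨hu1, hu2⟩
      rw [abs_of_nonneg (by linarith), abs_of_nonneg (by linarith)]
      linarith
  have := hsub.add_const ((μ (Ioi t)).toReal)
  simpa [ContinuousAt] using this


private lemma key_exp (μ : Measure ℝ) [IsProbabilityMeasure μ] (hint : Integrable id μ)
    (hcont : ∀ t : ℝ, μ {t} = 0) (hdmrl : Antitone (mrl μ)) {k r : ℝ} (hr : 0 < r)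
    (hfix : r = mrl μ (k + r)) :
    Real.exp (-1) * (μ (Ioi k)).toReal ≤ (μ (Ioi (k + r))).toReal := by
  have hScont : Continuous fun t : ℝ => (μ (Ioi t)).toReal := S_cont μ hcont
  have hGnonneg : ∀ t : ℝ, 0 ≤ ∫ x, max (x - t) 0 ∂μ :=
    fun t => integral_nonneg fun x => le_max_right _ _
  have hGS : ∀ t, t ≤ k + r → r * (μ (Ioi t)).toReal ≤ ∫ x, max (x - t) 0 ∂μ := by
    intro t ht
    by_cases h0 : (μ (Ioi t)).toReal = 0
    · rw [h0, mul_zero]; exact hGnonneg t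
    · have hSpos : 0 < (μ (Ioi t)).toReal := lt_of_le_of_ne ENNReal.toReal_nonneg (Ne.symm h0)
      have hm : r ≤ mrl μ t := by rw [hfix]; exact hdmrl ht
      have hm' : r ≤ (∫ x, max (x - t) 0 ∂μ) / (μ (Ioi t)).toReal := hm
      calc r * (μ (Ioi t)).toReal
          ≤ ((∫ x, max (x - t) 0 ∂μ) / (μ (Ioi t)).toReal) * (μ (Ioi t)).toReal :=
            mul_le_mul_of_nonneg_right hm' hSpos.le
        _ = ∫ x, max (x - t) 0 ∂μ := div_mul_cancel₀ _ hSpos.ne'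
  have hGid : ∀ t : ℝ, (∫ x, max (x - t) 0 ∂μ)
      = (∫ x, max (x - k) 0 ∂μ) - ∫ u in k..t, (μ (Ioi u)).toReal := by
    intro t
    rcases le_total k t with h | h
    · rw [intervalIntegral.integral_of_le h]
      have := G_sub μ hint h
      linarith
    · rw [intervalIntegral.integral_of_ge h]
      have := G_sub μ hint h
      linarith
  have hHder : ∀ t : ℝ, HasDerivAt (fun u => ∫ x in k..u, (μ (Ioi x)).toReal)
      ((μ (Ioi t)).toReal) t := fun t =>
    intervalIntegral.integral_hasDerivAt_right (hScont.intervalIntegrable _ _)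
      (hScont.stronglyMeasurableAtFilter _ _) hScont.continuousAt
  set φ : ℝ → ℝ := fun t =>
    ((∫ x, max (x - k) 0 ∂μ) - ∫ u in k..t, (μ (Ioi u)).toReal) * Real.exp ((t - k) / r)
    with hφ
  have hφder : ∀ t : ℝ, HasDerivAt φ
      ((-(μ (Ioi t)).toReal) * Real.exp ((t - k) / r)
        + ((∫ x, max (x - k) 0 ∂μ) - ∫ u in k..t, (μ (Ioi u)).toReal)
          * (Real.exp ((t - k) / r) * (1 / r))) t := by
    intro t
    have h1 : HasDerivAt (fun u : ℝ => (∫ x, max (x - k) 0 ∂μ) - ∫ x in k..u, (μ (Ioi x)).toReal)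
        (-(μ (Ioi t)).toReal) t := (hHder t).const_sub _
    have h2 : HasDerivAt (fun u : ℝ => Real.exp ((u - k) / r))
        (Real.exp ((t - k) / r) * (1 / r)) t := by
      have h3 : HasDerivAt (fun u : ℝ => (u - k) / r) (1 / r) t := by
        simpa using ((hasDerivAt_id t).sub_const k).div_const r
      exact h3.exp
    exact h1.mul h2
  have hdiff : Differentiable ℝ φ := fun t => (hφder t).differentiableAt
  have hmono : MonotoneOn φ (Icc k (k + r)) := by
    apply monotoneOn_of_deriv_nonneg (convex_Icc _ _) hdiff.continuous.continuousOn
      hdiff.differentiableOn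
    intro t ht
    rw [interior_Icc] at ht
    rw [(hφder t).deriv, ← hGid t]
    have hE := Real.exp_pos ((t - k) / r)
    have hGS' := hGS t ht.2.le
    have heq : -(μ (Ioi t)).toReal * Real.exp ((t - k) / r)
        + (∫ x, max (x - t) 0 ∂μ) * (Real.exp ((t - k) / r) * (1 / r))
        = ((∫ x, max (x - t) 0 ∂μ) - r * (μ (Ioi t)).toReal) * (Real.exp ((t - k) / r) / r) := by
      field_simp
      ring
    rw [heq]
    exact mul_nonneg (by linarith) (by positivity)
  have hle : φ k ≤ φ (k + r) :=
    hmono ⟨le_refl k, by linarith⟩ ⟨by linarith, le_refl _⟩ (by linarith)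
  have hφk : φ k = ∫ x, max (x - k) 0 ∂μ := by
    simp [hφ, intervalIntegral.integral_same]
  have hφkr : φ (k + r) = (∫ x, max (x - (k + r)) 0 ∂μ) * Real.exp 1 := by
    rw [hφ]
    show ((∫ x, max (x - k) 0 ∂μ) - ∫ u in k..(k + r), (μ (Ioi u)).toReal)
        * Real.exp ((k + r - k) / r) = _
    rw [← hGid (k + r)]
    congr 2
    field_simp
    ring
  have hS2pos : 0 < (μ (Ioi (k + r))).toReal := by
    by_contra h
    push_neg at h
    have h0 : (μ (Ioi (k + r))).toReal = 0 := le_antisymm h ENNReal.toReal_nonneg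
    rw [hfix] at hr
    simp [mrl, h0] at hr
  have hGkr : (∫ x, max (x - (k + r)) 0 ∂μ) = r * (μ (Ioi (k + r))).toReal := by
    have hfix' : r = (∫ x, max (x - (k + r)) 0 ∂μ) / (μ (Ioi (k + r))).toReal := hfix
    rw [eq_div_iff hS2pos.ne'] at hfix'
    linarith
  have h1 : r * (μ (Ioi k)).toReal ≤ ∫ x, max (x - k) 0 ∂μ := hGS k (by linarith)
  have final : (∫ x, max (x - k) 0 ∂μ) ≤ (r * (μ (Ioi (k + r))).toReal) * Real.exp 1 := by
    rw [← hGkr, ← hφkr, ← hφk]; exact hle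
  have h2 : (μ (Ioi k)).toReal ≤ (μ (Ioi (k + r))).toReal * Real.exp 1 := by nlinarith
  have h3 : Real.exp (-1) * Real.exp 1 = 1 := by rw [← Real.exp_add]; norm_num
  nlinarith [mul_le_mul_of_nonneg_left h2 (Real.exp_pos (-1)).le]

private lemma exp_tail (ν : Measure ℝ) [IsProbabilityMeasure ν] {l : ℝ} (hl : 0 < l)
    (hcdf : ∀ x : ℝ, 0 ≤ x → (ν (Iic x)).toReal = 1 - Real.exp (-(l * x))) {u : ℝ}
    (hu : 0 ≤ u) : ν (Ioi u) = ENNReal.ofReal (Real.exp (-(l * u))) := by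
  have h1 : ν (Iic u) + ν (Ioi u) = 1 := by
    rw [← measure_union (Iic_disjoint_Ioi le_rfl) measurableSet_Ioi, Iic_union_Ioi, measure_univ]
  have h2 : ν (Iic u) = ENNReal.ofReal (1 - Real.exp (-(l * u))) := by
    rw [← hcdf u hu, ENNReal.ofReal_toReal (measure_ne_top ν _)]
  have hle : Real.exp (-(l * u)) ≤ 1 := Real.exp_le_one_iff.2 (by nlinarith)
  have h3 : (1 : ENNReal) = ENNReal.ofReal (1 - Real.exp (-(l * u)))
      + ENNReal.ofReal (Real.exp (-(l * u))) := by
    rw [← ENNReal.ofReal_add (by linarith) (Real.exp_pos _).le]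
    norm_num
  rw [h2] at h1
  rw [h3] at h1
  exact (ENNReal.add_right_inj ENNReal.ofReal_ne_top).1 h1

private lemma exp_integral (l : ℝ) (hl : 0 < l) (t : ℝ) :
    ∫ u in Ioi t, Real.exp (-(l * u)) = Real.exp (-(l * t)) / l := by
  have hderiv : ∀ x ∈ Ici t, HasDerivAt (fun u : ℝ => -(Real.exp (-(l * u)) / l))
      (Real.exp (-(l * x))) x := by
    intro x _
    have h1 : HasDerivAt (fun u : ℝ => -(l * u)) (-l) x := by
      exact (((hasDerivAt_id x).const_mul l).neg).congr_deriv (by ring)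
    have h2 := (h1.exp.div_const l).neg
    exact h2.congr_deriv (by field_simp)
  have hint : IntegrableOn (fun u : ℝ => Real.exp (-(l * u))) (Ioi t) := by
    have := exp_neg_integrableOn_Ioi t hl
    simpa [neg_mul] using this
  have htend : Tendsto (fun u : ℝ => -(Real.exp (-(l * u)) / l)) atTop (nhds 0) := by
    have h1 : Tendsto (fun u : ℝ => -(l * u)) atTop atBot := by
      have h0 : Tendsto (fun u : ℝ => l * u) atTop atTop :=
        Tendsto.const_mul_atTop hl tendsto_id
      exact tendsto_neg_atBot_iff.2 h0
    have h2 : Tendsto (fun u : ℝ => Real.exp (-(l * u))) atTop (nhds 0) :=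
      Real.tendsto_exp_atBot.comp h1
    have := (h2.div_const l).neg
    simpa using this
  have := MeasureTheory.integral_Ioi_of_hasDerivAt_of_tendsto' hderiv hint htend
  rw [this]
  ring

private lemma exp_mrl (ν : Measure ℝ) [IsProbabilityMeasure ν] {l : ℝ} (hl : 0 < l)
    (hcdf : ∀ x : ℝ, 0 ≤ x → (ν (Iic x)).toReal = 1 - Real.exp (-(l * x))) {t : ℝ}
    (ht : 0 ≤ t) : mrl ν t = 1 / l := by
  have hS : (ν (Ioi t)).toReal = Real.exp (-(l * t)) := by
    rw [exp_tail ν hl hcdf ht, ENNReal.toReal_ofReal (Real.exp_pos _).le]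
  have hG : (∫ x, max (x - t) 0 ∂ν) = Real.exp (-(l * t)) / l := by
    rw [int_max_eq]
    have h1 : ∫⁻ u in Ioi t, ν (Ioi u)
        = ∫⁻ u in Ioi t, ENNReal.ofReal (Real.exp (-(l * u))) := by
      refine setLIntegral_congr_fun measurableSet_Ioi (fun u hu => ?_)
      exact exp_tail ν hl hcdf (le_trans ht (le_of_lt hu))
    have h2 : ∫⁻ u in Ioi t, ENNReal.ofReal (Real.exp (-(l * u)))
        = ENNReal.ofReal (∫ u in Ioi t, Real.exp (-(l * u))) := by
      refine (ofReal_integral_eq_lintegral_ofReal ?_ (ae_of_all _ fun u => (Real.exp_pos _).le)).symm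
      have := exp_neg_integrableOn_Ioi t hl
      simpa [neg_mul, IntegrableOn] using this
    rw [h1, h2, exp_integral l hl t, ENNReal.toReal_ofReal (by positivity)]
  rw [mrl, hS, hG]
  have hepos := (Real.exp_pos (-(l * t))).ne'
  field_simp


/-- For any DMRL distribution, the conditional probability of no transaction
`(F(r* + k) − F(k))/(1 − F(k))` is at most `1 − e⁻¹`; the bound is tight: for the
exponential distribution with rate `λ > 0` (characterized by its CDF `1 − e^{−λx}`), the
equilibrium margin is `r* = 1/λ` and the conditional probability equals `1 − e⁻¹` for all
`T, c ≥ 0`. -/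
theorem stmt17 (μ : Measure ℝ) [IsProbabilityMeasure μ]
    (hnonneg : μ (Iio 0) = 0) (hint : Integrable id μ) (hcont : ∀ t : ℝ, μ {t} = 0)
    (hdmrl : Antitone (mrl μ))
    (T c : ℝ) (hT : 0 ≤ T) (hc : 0 ≤ c) (k : ℝ) (hk : k = 3*T + c)
    (rH : EReal) (hrH : rH = essSup (fun x : ℝ => (x : EReal)) μ - (k : EReal))
    (hrHpos : 0 < rH)
    (rstar : ℝ) (hr1 : 0 < rstar) (hr2 : (rstar : EReal) < rH)
    (hfix : rstar = mrl μ (k + rstar)) :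
    (cdfR μ (rstar + k) - cdfR μ k) / (1 - cdfR μ k) ≤ 1 - Real.exp (-1) ∧
    (∀ ν : Measure ℝ, IsProbabilityMeasure ν → ∀ l : ℝ, 0 < l →
      ν (Iio 0) = 0 → (∀ x : ℝ, 0 ≤ x → (ν (Iic x)).toReal = 1 - Real.exp (-(l * x))) →
      ∀ T' c' : ℝ, 0 ≤ T' → 0 ≤ c' →
        (1/l) = mrl ν ((3*T' + c') + 1/l) ∧
        (∀ r : ℝ, 0 < r → r = mrl ν ((3*T' + c') + r) → r = 1/l) ∧
        (cdfR ν (1/l + (3*T' + c')) - cdfR ν (3*T' + c')) / (1 - cdfR ν (3*T' + c')) =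
          1 - Real.exp (-1)) := by
  constructor
  · have hkey := key_exp μ hint hcont hdmrl hr1 hfix
    have hS2pos : 0 < (μ (Ioi (k + rstar))).toReal := by
      by_contra h
      push_neg at h
      have h0 : (μ (Ioi (k + rstar))).toReal = 0 := le_antisymm h ENNReal.toReal_nonneg
      rw [hfix] at hr1
      simp [mrl, h0] at hr1
    have hSk : 0 < (μ (Ioi k)).toReal :=
      lt_of_lt_of_le hS2pos (sIoi_antitone μ (show k ≤ k + rstar by linarith))
    have hden : 1 - cdfR μ k = (μ (Ioi k)).toReal := one_sub_cdf μ k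
    have hnum : cdfR μ (rstar + k) - cdfR μ k
        = (μ (Ioi k)).toReal - (μ (Ioi (k + rstar))).toReal := by
      have h1 := cdf_sub μ (show k ≤ rstar + k by linarith)
      have h2 := sIoi_sub μ (show k ≤ k + rstar by linarith)
      have h3 : rstar + k = k + rstar := by ring
      rw [cdfR, cdfR, h3]
      rw [h3] at h1
      linarith
    rw [hnum, hden, div_le_iff₀ hSk]
    nlinarith [hkey]
  · intro ν hν l hl hν0 hcdf T' c' hT' hc'
    have hl' : (0:ℝ) < 1 / l := by positivity
    have hk' : (0:ℝ) ≤ 3 * T' + c' := by linarith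
    have hmrl : ∀ t : ℝ, 0 ≤ t → mrl ν t = 1 / l := fun t ht => exp_mrl ν hl hcdf ht
    refine ⟨?_, ?_, ?_⟩
    · rw [hmrl _ (by linarith)]
    · intro r hr hfix'
      rwa [hmrl _ (by linarith)] at hfix'
    · have h1 : (0:ℝ) ≤ 1 / l + (3 * T' + c') := by linarith
      simp only [cdfR]
      rw [hcdf _ h1, hcdf _ hk']
      have hexp : l * (1 / l + (3 * T' + c')) = 1 + l * (3 * T' + c') := by
        field_simp
      rw [hexp]
      have h3 : Real.exp (-(1 + l * (3 * T' + c')))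
          = Real.exp (-1) * Real.exp (-(l * (3 * T' + c'))) := by
        rw [← Real.exp_add]; ring_nf
      have h4 := (Real.exp_pos (-(l * (3 * T' + c')))).ne'
      rw [h3]
      field_simp
      ring
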